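/- Let A : ℝ → Matrix n n ℝ be a continuous real matrix-valued function and let Y : ℝ → Matrix n n ℝ satisfy Y'(s) = A(s) · Y(s) for all s and Y(0) = I. If ∫₀^t ‖A(τ)‖₂ dτ < log 2, then the series Ω = ∑_{k=1}^∞ (-1)^{k+1} (Y(t) - I)^k / k converges (since ‖Y(t) - I‖₂ < 1), and exp(Ω) = Y(t). -/

import Mathlib

attribute [local instance] Matrix.normedAddCommGroup Matrix.normedSpace

/-- The spectral norm of a real matrix: the operator norm of the associated linear map
between Euclidean spaces. -/
noncomputable def l2norm {n : Type*} [Fintype n] [DecidableEq n] (A : Matrix n n ℝ) : ℝ :=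
  ‖Matrix.toEuclideanCLM (𝕜 := ℝ) A‖

open NormedSpace in
theorem exp_mercator_banach {𝔸 : Type*} [NormedRing 𝔸] [NormedAlgebra ℝ 𝔸] [CompleteSpace 𝔸]
    {X : 𝔸} (hX : ‖X‖ < 1) :
    ∃ Ω : 𝔸, HasSum (fun k : ℕ => ((-1 : ℝ) ^ k / (k + 1)) • X ^ (k + 1)) Ω ∧
      NormedSpace.exp Ω = 1 + X := by
  have hX0 : (0:ℝ) ≤ ‖X‖ := norm_nonneg X
  set r : ℝ := 2 / (1 + ‖X‖) with hr_def
  have hr1 : 1 < r := by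
    rw [hr_def, lt_div_iff₀ (by linarith)]; linarith
  have hrX : r * ‖X‖ < 1 := by
    rw [hr_def, div_mul_eq_mul_div, div_lt_one (by linarith)]; linarith
  have hrX0 : (0:ℝ) ≤ r * ‖X‖ := by positivity
  set g : ℕ → ℝ → 𝔸 := fun k s => (((-1:ℝ)^k * s^(k+1)) / (k+1)) • X^(k+1) with hg_def
  set g' : ℕ → ℝ → 𝔸 := fun k s => (((-1:ℝ)^k * s^k)) • X^(k+1) with hg'_def
  set u : ℕ → ℝ := fun k => ‖X‖ * (r * ‖X‖)^k with hu_def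
  have hu : Summable u := (summable_geometric_of_lt_one hrX0 hrX).mul_left _
  have hderiv : ∀ (k : ℕ) (s : ℝ), HasDerivAt (g k) (g' k s) s := by
    intro k s
    have h1 : HasDerivAt (fun s : ℝ => s ^ (k+1)) (((k:ℝ)+1) * s ^ k) s := by
      simpa using hasDerivAt_pow (k+1) s
    have h2 := (h1.const_mul (((-1:ℝ)^k / (k+1)))).smul_const (X^(k+1))
    have hk : ((k:ℝ)+1) ≠ 0 := by positivity
    have e1 : g k = fun y => ((-1:ℝ)^k / (k+1) * y^(k+1)) • X^(k+1) := by
      funext y; simp only [hg_def]; congr 1; ring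
    rw [e1]; refine h2.congr_deriv ?_; simp only [hg'_def]; congr 1
    rw [← mul_assoc, div_mul_cancel₀ _ hk]
  have hbound : ∀ (k : ℕ) (s : ℝ), s ∈ Set.Ioo (-r) r → ‖g' k s‖ ≤ u k := by
    intro k s hs
    have hsr : |s| ≤ r := le_of_lt (abs_lt.2 ⟨hs.1, hs.2⟩)
    have h1 : ‖g' k s‖ = |s|^k * ‖X^(k+1)‖ := by
      simp [hg'_def, norm_smul, abs_mul, abs_pow]
    rw [h1, hu_def]
    calc |s|^k * ‖X^(k+1)‖ ≤ r^k * ‖X‖^(k+1) :=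
          mul_le_mul (pow_le_pow_left₀ (abs_nonneg s) hsr k) (norm_pow_le' X k.succ_pos)
            (norm_nonneg _) (by positivity)
      _ = ‖X‖ * (r*‖X‖)^k := by rw [mul_pow]; ring
  have h0mem : (0:ℝ) ∈ Set.Ioo (-r) r := ⟨by linarith, by linarith⟩
  have h1mem : (1:ℝ) ∈ Set.Ioo (-r) r := ⟨by linarith, hr1⟩
  have hg0eq : ∀ k, g k 0 = 0 := by intro k; simp [hg_def]
  have hg0 : Summable fun k => g k 0 := summable_zero.congr fun k => (hg0eq k).symm
  set L : ℝ → 𝔸 := fun z => ∑' k, g k z with hL_def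
  set D : ℝ → 𝔸 := fun s => ∑' k, g' k s with hD_def
  have hL : ∀ s ∈ Set.Ioo (-r) r, HasDerivAt L (D s) s := fun s hs =>
    hasDerivAt_tsum_of_isPreconnected hu isOpen_Ioo isPreconnected_Ioo
      (fun k y _ => hderiv k y) hbound h0mem hg0 hs
  have hsummable : ∀ s ∈ Set.Ioo (-r) r, Summable fun k => g k s := fun s hs =>
    summable_of_summable_hasDerivAt_of_isPreconnected hu isOpen_Ioo isPreconnected_Ioo
      (fun k y _ => hderiv k y) hbound h0mem hg0 hs
  have hcomm_gg : ∀ (j k : ℕ) (a b : ℝ), Commute (g j a) (g k b) := fun j k a b =>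
    (((Commute.refl X).pow_pow _ _).smul_left _).smul_right _
  have hcommL : ∀ a b : ℝ, Commute (L a) (L b) := fun a b =>
    Commute.tsum_left _ fun j => Commute.tsum_right _ fun k => hcomm_gg j k a b
  set E : ℝ → 𝔸 := fun s => exp (L s) with hE_def
  have hE : ∀ s ∈ Set.Ioo (-r) r, HasDerivAt E (D s * E s) s := by
    intro s hs
    have hfact : ∀ h : ℝ, E h = exp (L h - L s) * exp (L s) := by
      intro h
      rw [← exp_add_of_commute_of_mem_ball (𝕂 := ℝ) ((hcommL h s).sub_left (Commute.refl (L s)))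
        ((expSeries_radius_eq_top ℝ 𝔸).symm ▸ edist_lt_top _ _)
        ((expSeries_radius_eq_top ℝ 𝔸).symm ▸ edist_lt_top _ _), sub_add_cancel]
    have hinner : HasFDerivAt (fun y : 𝔸 => y - L s) (ContinuousLinearMap.id ℝ 𝔸) (L s) :=
      (hasFDerivAt_id _).sub_const _
    have h2 : HasFDerivAt (fun y : 𝔸 => exp (y - L s)) (ContinuousLinearMap.id ℝ 𝔸) (L s) := by
      have h0 : HasFDerivAt (fun y : 𝔸 => exp (y - L s))
          ((1 : 𝔸 →L[ℝ] 𝔸).comp (ContinuousLinearMap.id ℝ 𝔸)) (L s) := by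
        refine HasFDerivAt.comp _ ?_ hinner
        rw [sub_self]
        exact hasFDerivAt_exp_zero
      simpa [ContinuousLinearMap.one_def] using h0
    have hq : HasDerivAt (fun h : ℝ => exp (L h - L s)) (D s) s := by
      simpa [Function.comp_def] using h2.comp_hasDerivAt s (hL s hs)
    have h3 : HasDerivAt (fun h : ℝ => exp (L h - L s) * exp (L s))
        (D s * exp (L s)) s := hq.mul_const _
    exact h3.congr_of_eventuallyEq (Filter.Eventually.of_forall hfact)
  have hwlt : ∀ s ∈ Set.Ioo (-r) r, ‖(-s) • X‖ < 1 := by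
    intro s hs
    have hsr : |s| ≤ r := le_of_lt (abs_lt.2 ⟨hs.1, hs.2⟩)
    calc ‖(-s) • X‖ = |s| * ‖X‖ := by rw [norm_smul]; simp
      _ ≤ r * ‖X‖ := mul_le_mul_of_nonneg_right hsr hX0
      _ < 1 := hrX
  have hDgeom : ∀ s ∈ Set.Ioo (-r) r, D s = X * ∑' k : ℕ, ((-s) • X)^k := by
    intro s hs
    have h1 : ∀ k : ℕ, g' k s = X * ((-s) • X)^k := by
      intro k
      have h2 : X * ((-s) • X)^k = ((-s)^k) • X^(k+1) := by
        rw [smul_pow, mul_smul_comm, ← pow_succ']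
      rw [h2, hg'_def, neg_pow]
    calc D s = ∑' k : ℕ, (X * ((-s) • X)^k) := tsum_congr h1
      _ = X * ∑' k : ℕ, ((-s) • X)^k :=
          (summable_geometric_of_norm_lt_one (hwlt s hs)).tsum_mul_left X
  have hDF : ∀ s ∈ Set.Ioo (-r) r, D s * (1 + s • X) = X := by
    intro s hs
    have h1 : (1:𝔸) + s • X = 1 - (-s) • X := by rw [neg_smul, sub_neg_eq_add]
    rw [hDgeom s hs, h1, mul_assoc, geom_series_mul_neg _ (hwlt s hs), mul_one]
  set K : ℝ := ∑' k, u k with hK_def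
  have hDnorm : ∀ s ∈ Set.Ioo (-r) r, ‖D s‖ ≤ K := fun s hs =>
    tsum_of_norm_bounded hu.hasSum fun k => hbound k s hs
  set G : ℝ → 𝔸 := fun s => E s - (1 + s • X) with hG_def
  have hIcc : Set.Icc (0:ℝ) 1 ⊆ Set.Ioo (-r) r := fun s hs =>
    ⟨by linarith [hs.1], by linarith [hs.2]⟩
  have hF : ∀ s : ℝ, HasDerivAt (fun z : ℝ => (1:𝔸) + z • X) X s := by
    intro s
    simpa using ((hasDerivAt_id s).smul_const X).const_add (1:𝔸)
  have hG' : ∀ s ∈ Set.Ioo (-r) r, HasDerivAt G (D s * G s) s := by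
    intro s hs
    have h1 := (hE s hs).sub (hF s)
    have h2 : D s * G s = D s * E s - X := by
      show D s * (E s - (1 + s • X)) = D s * E s - X
      rw [mul_sub, hDF s hs]
    rw [h2]; exact h1
  have hGcont : ContinuousOn G (Set.Icc 0 1) := fun s hs =>
    ((hG' s (hIcc hs)).continuousAt).continuousWithinAt
  have hL0 : L 0 = 0 := by
    show (∑' k, g k 0) = 0
    simp only [hg0eq]; exact tsum_zero
  have hG0 : G 0 = 0 := by
    show exp (L 0) - (1 + (0:ℝ) • X) = 0
    rw [hL0, exp_zero]; simp
  have hgron := norm_le_gronwallBound_of_norm_deriv_right_le (f := G)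
    (f' := fun s => D s * G s) (δ := 0) (K := K) (ε := 0) (a := 0) (b := 1)
    hGcont
    (fun s hs => (hG' s (hIcc ⟨hs.1, hs.2.le⟩)).hasDerivWithinAt)
    (by rw [hG0]; simp)
    (fun s hs => by
      have h1 : ‖D s * G s‖ ≤ ‖D s‖ * ‖G s‖ := norm_mul_le _ _
      have h2 := hDnorm s (hIcc ⟨hs.1, hs.2.le⟩)
      have h3 : ‖D s‖ * ‖G s‖ ≤ K * ‖G s‖ :=
        mul_le_mul_of_nonneg_right h2 (norm_nonneg _)
      linarith)
  have hG1 : G 1 = 0 := by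
    have := hgron 1 ⟨zero_le_one, le_refl 1⟩
    rw [gronwallBound_ε0] at this
    simp only [zero_mul] at this
    exact norm_le_zero_iff.mp this
  have hE1 : exp (L 1) = 1 + X := by
    have h : E 1 = 1 + (1:ℝ) • X := sub_eq_zero.mp hG1
    simpa using h
  refine ⟨L 1, ?_, hE1⟩
  have hL1 : L 1 = ∑' k : ℕ, ((-1 : ℝ) ^ k / (k + 1)) • X ^ (k + 1) := by
    show (∑' k, g k 1) = _
    exact tsum_congr fun k => by simp [hg_def]
  have hsum2 : Summable fun k : ℕ => ((-1 : ℝ) ^ k / (k + 1)) • X ^ (k + 1) :=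
    (hsummable 1 h1mem).congr fun k => by simp [hg_def]
  rw [hL1]
  exact hsum2.hasSum


theorem gronwall_banach {𝔹 : Type*} [NormedRing 𝔹] [NormedAlgebra ℝ 𝔹]
    (a u : ℝ → 𝔹) (hacont : Continuous a)
    (hu' : ∀ s, HasDerivAt u (a s * u s) s)
    (hu0 : u 0 = 1) (hone : ‖(1:𝔹)‖ ≤ 1) (t : ℝ) (ht : 0 < t)
    (hint : (∫ τ in (0:ℝ)..t, ‖a τ‖) < Real.log 2) : ‖u t - 1‖ < 1 := by
  have hanorm : Continuous fun s => ‖a s‖ := hacont.norm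
  set w : ℝ → ℝ := fun s => ∫ τ in (0:ℝ)..s, ‖a τ‖ with hw_def
  have hw : ∀ s, HasDerivAt w ‖a s‖ s := fun s =>
    (hanorm.integral_hasStrictDerivAt 0 s).hasDerivAt
  have hwt : w t < Real.log 2 := hint
  have hw0 : w 0 = 0 := intervalIntegral.integral_same
  set ε : ℝ := (Real.log 2 - w t) / (2 * t) with hε_def
  have hε : 0 < ε := div_pos (by linarith) (by linarith)
  set Bo : ℝ → ℝ := fun s => Real.exp (w s + ε * s) - 1 with hBo_def
  set Bo' : ℝ → ℝ := fun s => (‖a s‖ + ε) * Real.exp (w s + ε * s) with hBo'_def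
  have hBo : ∀ s, HasDerivAt Bo (Bo' s) s := by
    intro s
    have h1 : HasDerivAt (fun z => w z + ε * z) (‖a s‖ + ε) s := by
      have h2 := (hw s).add ((hasDerivAt_id s).const_mul ε)
      exact h2.congr_deriv (by ring)
    have h3 := (h1.exp).sub_const 1
    simpa [hBo_def, hBo'_def, mul_comm] using h3
  have hf' : ∀ s, HasDerivAt (fun z => u z - 1) (a s * u s) s := fun s => (hu' s).sub_const 1
  have hfc : ContinuousOn (fun z => u z - 1) (Set.Icc 0 t) := fun s _ =>
    (hf' s).continuousAt.continuousWithinAt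
  have key := image_norm_le_of_norm_deriv_right_lt_deriv_boundary
    (f := fun z => u z - 1) (f' := fun s => a s * u s) (B := Bo) (B' := Bo') (a := 0) (b := t)
    hfc (fun s _ => (hf' s).hasDerivWithinAt)
    (by simp [hu0, hBo_def, hw0])
    hBo
    (fun s _ heq => by
      have h1 : ‖a s * u s‖ ≤ ‖a s‖ * ‖u s‖ := norm_mul_le _ _
      have h2 : ‖u s‖ ≤ ‖u s - 1‖ + 1 := by
        have h3 := norm_add_le (u s - 1) 1
        rw [sub_add_cancel] at h3
        linarith
      have h4 : ‖u s - 1‖ = Bo s := heq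
      have h5 : Bo s + 1 = Real.exp (w s + ε * s) := by rw [hBo_def]; ring
      have h6 : ‖a s * u s‖ ≤ ‖a s‖ * Real.exp (w s + ε * s) := by
        calc ‖a s * u s‖ ≤ ‖a s‖ * ‖u s‖ := h1
          _ ≤ ‖a s‖ * (Bo s + 1) := by
              apply mul_le_mul_of_nonneg_left _ (norm_nonneg _)
              rw [← h4]; linarith
          _ = ‖a s‖ * Real.exp (w s + ε * s) := by rw [h5]
      have h7 : ‖a s‖ * Real.exp (w s + ε * s) < Bo' s := by
        have hE := Real.exp_pos (w s + ε * s)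
        have h8 : Bo' s = (‖a s‖ + ε) * Real.exp (w s + ε * s) := rfl
        rw [h8]
        nlinarith [mul_pos hε hE]
      linarith)
  have hBt : Bo t < 1 := by
    have hεt : ε * t = (Real.log 2 - w t) / 2 := by
      rw [hε_def]; field_simp
    have h1 : w t + ε * t < Real.log 2 := by rw [hεt]; linarith
    have h2 : Real.exp (w t + ε * t) < 2 := by
      have h3 := Real.exp_lt_exp.mpr h1
      rwa [Real.exp_log (by norm_num : (0:ℝ) < 2)] at h3
    rw [hBo_def]; simp only; linarith
  have := key ⟨ht.le, le_refl t⟩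
  linarith

/-- If `Y` is the fundamental solution of `Y' = A(t) Y`, `Y(0) = I`, and
`∫₀^t ‖A(τ)‖₂ dτ < log 2`, then `‖Y(t) - I‖₂ < 1`, the Mercator series
`Ω = ∑_{k=1}^∞ (-1)^{k+1} (Y(t) - I)^k / k` converges, and `exp(Ω) = Y(t)`. -/
theorem magnus_stmt7 {n : Type*} [Fintype n] [DecidableEq n]
    (A : ℝ → Matrix n n ℝ) (hA : Continuous A)
    (Y : ℝ → Matrix n n ℝ)
    (hY : ∀ s : ℝ, HasDerivAt Y (A s * Y s) s) (hY0 : Y 0 = 1)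
    (t : ℝ) (ht : 0 < t)
    (hint : (∫ τ in (0:ℝ)..t, l2norm (A τ)) < Real.log 2) :
    l2norm (Y t - 1) < 1 ∧
    ∃ Ω : Matrix n n ℝ,
      HasSum (fun k : ℕ => ((-1 : ℝ) ^ k / (k + 1)) • (Y t - 1) ^ (k + 1)) Ω ∧
      NormedSpace.exp Ω = Y t := by
  classical
  set e := Matrix.toEuclideanCLM (𝕜 := ℝ) (n := n) with he_def
  let eL : Matrix n n ℝ ≃ₗ[ℝ] (EuclideanSpace ℝ n →L[ℝ] EuclideanSpace ℝ n) :=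
    { toFun := fun M => e M, invFun := fun M => e.symm M,
      map_add' := fun x y => map_add e x y,
      map_smul' := fun c x => map_smul e c x,
      left_inv := fun M => e.symm_apply_apply M,
      right_inv := fun M => e.apply_symm_apply M }
  let eC : Matrix n n ℝ ≃L[ℝ] (EuclideanSpace ℝ n →L[ℝ] EuclideanSpace ℝ n) :=
    eL.toContinuousLinearEquiv
  have hacont : Continuous fun s => e (A s) := by
    have h1 : Continuous fun s => eC (A s) := eC.continuous.comp hA
    exact h1
  have hu' : ∀ s, HasDerivAt (fun z => e (Y z)) (e (A s) * e (Y s)) s := by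
    intro s
    have hfd := ContinuousLinearMap.hasFDerivAt
      (eC : Matrix n n ℝ →L[ℝ] (EuclideanSpace ℝ n →L[ℝ] EuclideanSpace ℝ n)) (x := Y s)
    have h1 := hfd.comp_hasDerivAt s (hY s)
    have h2 : (eC : Matrix n n ℝ →L[ℝ] (EuclideanSpace ℝ n →L[ℝ] EuclideanSpace ℝ n))
        (A s * Y s) = e (A s) * e (Y s) := map_mul e _ _
    replace h1 := h1.congr_deriv h2
    exact h1
  have hu0 : e (Y 0) = 1 := by rw [hY0, map_one]
  have hone : ‖(1 : EuclideanSpace ℝ n →L[ℝ] EuclideanSpace ℝ n)‖ ≤ 1 := by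
    rw [ContinuousLinearMap.one_def]
    exact ContinuousLinearMap.norm_id_le
  have hintegral : (∫ τ in (0:ℝ)..t, ‖e (A τ)‖) < Real.log 2 := hint
  have hXlt : ‖e (Y t) - 1‖ < 1 :=
    gronwall_banach (fun s => e (A s)) (fun s => e (Y s)) hacont hu' hu0 hone t ht hintegral
  have hsub : e (Y t - 1) = e (Y t) - 1 := by rw [map_sub, map_one]
  have hpart1 : l2norm (Y t - 1) < 1 := by
    have h2 : l2norm (Y t - 1) = ‖e (Y t) - 1‖ := by
      rw [l2norm, ← he_def, hsub]
    rw [h2]; exact hXlt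
  refine ⟨hpart1, ?_⟩
  obtain ⟨Ω', hΩ'sum, hΩ'exp⟩ := exp_mercator_banach hXlt
  have hmapexp : ∀ M : Matrix n n ℝ,
      NormedSpace.exp M = e.symm (NormedSpace.exp (e M)) := by
    intro M
    have hsummexp : Summable fun k : ℕ => ((k.factorial : ℝ)⁻¹) • (e M)^k :=
      NormedSpace.expSeries_summable' (e M)
    rw [NormedSpace.exp_eq_tsum ℝ, NormedSpace.exp_eq_tsum ℝ]
    calc (∑' k : ℕ, ((k.factorial : ℝ)⁻¹) • M^k)
        = ∑' k : ℕ, e.symm (((k.factorial : ℝ)⁻¹) • (e M)^k) := by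
          refine tsum_congr fun k => ?_
          rw [map_smul, map_pow, e.symm_apply_apply]
      _ = eC.symm (∑' k : ℕ, ((k.factorial : ℝ)⁻¹) • (e M)^k) :=
          (ContinuousLinearMap.map_tsum
            (eC.symm : (EuclideanSpace ℝ n →L[ℝ] EuclideanSpace ℝ n) →L[ℝ] Matrix n n ℝ)
            hsummexp).symm
  refine ⟨e.symm Ω', ?_, ?_⟩
  · have h1 := hΩ'sum.mapL
      (eC.symm : (EuclideanSpace ℝ n →L[ℝ] EuclideanSpace ℝ n) →L[ℝ] Matrix n n ℝ)
    have h2 : (fun k : ℕ => (eC.symm : (EuclideanSpace ℝ n →L[ℝ] EuclideanSpace ℝ n) →L[ℝ]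
        Matrix n n ℝ) (((-1 : ℝ) ^ k / (k + 1)) • (e (Y t) - 1) ^ (k + 1)))
        = fun k : ℕ => ((-1 : ℝ) ^ k / (k + 1)) • (Y t - 1) ^ (k + 1) := by
      funext k
      show e.symm (((-1 : ℝ) ^ k / (k + 1)) • (e (Y t) - 1) ^ (k + 1)) = _
      rw [map_smul, map_pow, ← hsub, e.symm_apply_apply]
    rw [h2] at h1
    exact h1
  · rw [hmapexp, e.apply_symm_apply, hΩ'exp]
    have h3 : (1 : EuclideanSpace ℝ n →L[ℝ] EuclideanSpace ℝ n) + (e (Y t) - 1) = e (Y t) := by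
      abel
    rw [h3]
    exact e.symm_apply_apply _
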